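/- Let p be a pmf on X×Y (X, Y finite) with p(x,y) > 0 for all (x,y). Then ε₁(p) equals the minimum, over all pairs of pmfs μ, γ on X×Y having equal marginals (Σ_y μ(x,y) = Σ_y γ(x,y) for all x and Σ_x μ(x,y) = Σ_x γ(x,y) for all y), of Π_{(x,y)∈X×Y} p(x,y)^{γ(x,y) − μ(x,y)}. -/

import Mathlib

/-- A probability mass function on a finite set `S`. -/
def IsPMF {S : Type*} [Fintype S] (p : S → ℝ) : Prop :=
  (∀ s, 0 ≤ p s) ∧ ∑ s, p s = 1

/-- The value assigned to a path `(x₁,y₁,…,x_k,y_k)` (indexed here by `Fin (m+1)`,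
so `k = m+1 ≥ 1`).  Subtraction in `Fin (m+1)` is cyclic, so the denominator is
`p(x₁,y_k) · ∏_{i=2}^k p(x_i,y_{i-1})`. -/
noncomputable def pathValue {X Y : Type*} [Fintype X] [Fintype Y] (p : X × Y → ℝ)
    {m : ℕ} (x : Fin (m + 1) → X) (y : Fin (m + 1) → Y) : ℝ :=
  ((∏ i, p (x i, y i)) / ∏ i, p (x i, y (i - 1))) ^ (1 / (m + 1 : ℝ))

/-- A path is admissible if the `x_i` are pairwise distinct, the `y_i` are pairwise
distinct, `p(x₁,y_k) > 0`, and `p(x_i,y_{i-1}) > 0` for `2 ≤ i ≤ k`. -/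
def IsAdmissiblePath {X Y : Type*} [Fintype X] [Fintype Y] (p : X × Y → ℝ)
    {m : ℕ} (x : Fin (m + 1) → X) (y : Fin (m + 1) → Y) : Prop :=
  Function.Injective x ∧ Function.Injective y ∧ ∀ i, 0 < p (x i, y (i - 1))

/-- `ε₁(p)`: the minimum value over all admissible paths. -/
noncomputable def eps1 {X Y : Type*} [Fintype X] [Fintype Y] (p : X × Y → ℝ) : ℝ :=
  sInf { v : ℝ | ∃ (m : ℕ) (x : Fin (m + 1) → X) (y : Fin (m + 1) → Y),
    IsAdmissiblePath p x y ∧ v = pathValue p x y }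


open Finset
open scoped Classical
set_option linter.unusedSectionVars false

section Helpers

variable {X Y : Type*} [Fintype X] [Fintype Y]

/-- Indicator counting function of the edges of a path. -/
noncomputable def edgeInd {m : ℕ} (x : Fin (m + 1) → X) (y : Fin (m + 1) → Y)
    (s : X × Y) : ℝ :=
  ∑ i, if (x i, y i) = s then 1 else 0

lemma edgeInd_nonneg {m : ℕ} (x : Fin (m + 1) → X) (y : Fin (m + 1) → Y) (s : X × Y) :
    0 ≤ edgeInd x y s := by
  apply Finset.sum_nonneg
  intro i _
  split <;> norm_num

lemma sum_edgeInd_mul {m : ℕ} (x : Fin (m + 1) → X) (y : Fin (m + 1) → Y) (f : X × Y → ℝ) :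
    ∑ s, edgeInd x y s * f s = ∑ i, f (x i, y i) := by
  unfold edgeInd
  simp only [Finset.sum_mul, ite_mul, one_mul, zero_mul]
  rw [Finset.sum_comm]
  simp [Finset.sum_ite_eq]

lemma sum_edgeInd {m : ℕ} (x : Fin (m + 1) → X) (y : Fin (m + 1) → Y) :
    ∑ s, edgeInd x y s = m + 1 := by
  have := sum_edgeInd_mul x y (fun _ => (1 : ℝ))
  simpa using this

lemma sum_edgeInd_row {m : ℕ} (x : Fin (m + 1) → X) (y : Fin (m + 1) → Y) (a : X) :
    ∑ b, edgeInd x y (a, b) = ∑ i, if x i = a then (1 : ℝ) else 0 := by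
  unfold edgeInd
  rw [Finset.sum_comm]
  refine Finset.sum_congr rfl fun i _ => ?_
  by_cases h : x i = a
  · simp [Prod.ext_iff, h, Finset.sum_ite_eq]
  · simp [Prod.ext_iff, h]

lemma sum_edgeInd_col {m : ℕ} (x : Fin (m + 1) → X) (y : Fin (m + 1) → Y) (b : Y) :
    ∑ a, edgeInd x y (a, b) = ∑ i, if y i = b then (1 : ℝ) else 0 := by
  unfold edgeInd
  rw [Finset.sum_comm]
  refine Finset.sum_congr rfl fun i _ => ?_
  by_cases h : y i = b
  · simp [Prod.ext_iff, h, Finset.sum_ite_eq]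
  · simp [Prod.ext_iff, h]

lemma edgeInd_self {m : ℕ} {x : Fin (m + 1) → X} {y : Fin (m + 1) → Y}
    (hx : Function.Injective x) (i₀ : Fin (m + 1)) :
    edgeInd x y (x i₀, y i₀) = 1 := by
  unfold edgeInd
  rw [Finset.sum_eq_single i₀]
  · simp
  · intro i _ hi
    rw [if_neg]
    intro h
    exact hi (hx (congrArg Prod.fst h))
  · simp

lemma edgeInd_of_not_mem {m : ℕ} {x : Fin (m + 1) → X} {y : Fin (m + 1) → Y}
    {s : X × Y} (h : ∀ i, (x i, y i) ≠ s) :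
    edgeInd x y s = 0 := by
  unfold edgeInd
  apply Finset.sum_eq_zero
  intro i _
  rw [if_neg (h i)]

/-- Reindexing a cyclic shift. -/
lemma sum_shift {m : ℕ} (g : Fin (m + 1) → ℝ) :
    ∑ i, g (i - 1) = ∑ i, g i := by
  apply Finset.sum_bijective (· - (1 : Fin (m + 1)))
  · exact (Equiv.subRight (1 : Fin (m + 1))).bijective
  · simp
  · intros; rfl

lemma fin_sub_one_val {m : ℕ} (hm : 1 ≤ m) (t : Fin (m + 1)) :
    ((t - 1 : Fin (m + 1)) : ℕ) = if (t : ℕ) = 0 then m else (t : ℕ) - 1 := by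
  rw [Fin.sub_def]
  have h1 : ((1 : Fin (m + 1)) : ℕ) = 1 := by
    rw [Fin.val_one']; exact Nat.mod_eq_of_lt (by omega)
  rw [h1]
  simp only
  rcases Nat.eq_zero_or_pos (t : ℕ) with h | h
  · rw [if_pos h, h]
    rw [Nat.add_zero, Nat.mod_eq_of_lt] <;> omega
  · rw [if_neg (by omega)]
    have : m + 1 - 1 + (t : ℕ) = ((t : ℕ) - 1) + (m + 1) := by omega
    rw [this, Nat.add_mod_right, Nat.mod_eq_of_lt (by omega)]

/-- Assemble a cycle from a segment of an alternating walk. -/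
lemma assemble_cycle (δ : X × Y → ℝ) (a : ℕ → X) (b : ℕ → Y) (i j : ℕ) (hij : i < j)
    (hpos : ∀ n, 0 < δ (a (n + 1), b n))
    (hneg : ∀ n, δ (a n, b n) < 0)
    (hclose : δ (a j, b i) < 0)
    (hainj : ∀ s t, i < s → s ≤ j → i < t → t ≤ j → a s = a t → s = t)
    (hbinj : ∀ s t, i ≤ s → s < j → i ≤ t → t < j → b s = b t → s = t) :
    ∃ (m : ℕ) (x : Fin (m + 1) → X) (y : Fin (m + 1) → Y),
      Function.Injective x ∧ Function.Injective y ∧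
      (∀ t, 0 < δ (x t, y t)) ∧ (∀ t, δ (x t, y (t - 1)) < 0) := by
  rcases Nat.lt_or_ge (i + 1) j with hj | hj
  swap
  · exfalso
    have hji : j = i + 1 := by omega
    have h1 := hpos i
    rw [← hji] at h1
    exact absurd h1 (not_lt.mpr (le_of_lt hclose))
  · set m := j - i - 1 with hm
    have hm1 : 1 ≤ m := by omega
    refine ⟨m, fun t => a (j - t.val), fun t => b (j - 1 - t.val), ?_, ?_, ?_, ?_⟩
    · intro s t h
      simp only at h
      have hs := s.isLt
      have ht := t.isLt
      have := hainj (j - s.val) (j - t.val) (by omega) (by omega) (by omega) (by omega) h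
      exact Fin.ext (by omega)
    · intro s t h
      simp only at h
      have hs := s.isLt
      have ht := t.isLt
      have := hbinj (j - 1 - s.val) (j - 1 - t.val) (by omega) (by omega) (by omega) (by omega) h
      exact Fin.ext (by omega)
    · intro t
      simp only
      have ht := t.isLt
      have e1 : j - t.val = (j - 1 - t.val) + 1 := by omega
      rw [e1]
      exact hpos _
    · intro t
      simp only
      have ht := t.isLt
      have hval := fin_sub_one_val hm1 t
      by_cases h0 : (t : ℕ) = 0
      · have e1 : j - ((t : Fin (m + 1)) : ℕ) = j := by omega
        have e2 : j - 1 - ((t - 1 : Fin (m + 1)) : ℕ) = i := by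
          rw [hval, if_pos h0]; omega
        rw [e1, e2]
        exact hclose
      · have e2 : j - 1 - ((t - 1 : Fin (m + 1)) : ℕ) = j - (t : ℕ) := by
          rw [hval, if_neg h0]; omega
        rw [e2]
        exact hneg _

/-- Extract a conformal cycle from a nonzero function with zero marginals. -/
lemma exists_cycle (δ : X × Y → ℝ)
    (hrow : ∀ a, ∑ b, δ (a, b) = 0) (hcol : ∀ b, ∑ a, δ (a, b) = 0)
    (hne : ∃ s, δ s ≠ 0) :
    ∃ (m : ℕ) (x : Fin (m + 1) → X) (y : Fin (m + 1) → Y),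
      Function.Injective x ∧ Function.Injective y ∧
      (∀ t, 0 < δ (x t, y t)) ∧ (∀ t, δ (x t, y (t - 1)) < 0) := by
  classical
  have hX : Nonempty X := ⟨hne.choose.1⟩
  have hY : Nonempty Y := ⟨hne.choose.2⟩
  have h1 : ∀ a : X, (∃ b, 0 < δ (a, b)) → ∃ b, δ (a, b) < 0 := by
    rintro a ⟨b0, hb0⟩
    by_contra hc
    push_neg at hc
    have h := Finset.sum_pos' (fun b _ => hc b) ⟨b0, Finset.mem_univ _, hb0⟩
    rw [hrow a] at h
    exact lt_irrefl _ h
  have h2 : ∀ b : Y, (∃ a, δ (a, b) < 0) → ∃ a, 0 < δ (a, b) := by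
    rintro b ⟨a0, ha0⟩
    by_contra hc
    push_neg at hc
    have h : (0:ℝ) < ∑ a, -δ (a, b) :=
      Finset.sum_pos' (fun a _ => by linarith [hc a]) ⟨a0, Finset.mem_univ _, by linarith⟩
    rw [show (∑ a, -δ (a, b)) = -∑ a, δ (a, b) by rw [Finset.sum_neg_distrib], hcol b, neg_zero] at h
    exact lt_irrefl _ h
  have hstart : ∃ s : X × Y, 0 < δ s := by
    obtain ⟨s, hs⟩ := hne
    rcases lt_trichotomy (δ s) 0 with h | h | h
    · obtain ⟨a', ha'⟩ := h2 s.2 ⟨s.1, by rwa [Prod.mk.eta]⟩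
      exact ⟨(a', s.2), ha'⟩
    · exact absurd h hs
    · exact ⟨s, h⟩
  have h1' : ∀ a : X, ∃ b, (∃ b', 0 < δ (a, b')) → δ (a, b) < 0 := by
    intro a
    by_cases h : ∃ b', 0 < δ (a, b')
    · obtain ⟨b, hb⟩ := h1 a h
      exact ⟨b, fun _ => hb⟩
    · exact ⟨Classical.arbitrary Y, fun hh => absurd hh h⟩
  have h2' : ∀ b : Y, ∃ a, (∃ a', δ (a', b) < 0) → 0 < δ (a, b) := by
    intro b
    by_cases h : ∃ a', δ (a', b) < 0
    · obtain ⟨a, ha⟩ := h2 b h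
      exact ⟨a, fun _ => ha⟩
    · exact ⟨Classical.arbitrary X, fun hh => absurd hh h⟩
  choose B hB using h1'
  choose A hA using h2'
  obtain ⟨s0, hs0⟩ := hstart
  set step : X × Y → X × Y := fun q => (A q.2, B (A q.2)) with hstep_def
  set g : ℕ → X × Y := fun n => step^[n] (s0.1, B s0.1) with hg_def
  have hgsucc : ∀ n, g (n + 1) = step (g n) := fun n => Function.iterate_succ_apply' step n _
  have hgneg : ∀ n, δ (g n) < 0 := by
    intro n
    induction n with
    | zero => exact hB s0.1 ⟨s0.2, by rw [Prod.mk.eta]; exact hs0⟩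
    | succ k ih =>
      rw [hgsucc k]
      have hpos := hA (g k).2 ⟨(g k).1, by rw [Prod.mk.eta]; exact ih⟩
      exact hB _ ⟨(g k).2, hpos⟩
  have hgpos : ∀ n, 0 < δ ((g (n + 1)).1, (g n).2) := by
    intro n
    rw [hgsucc n]
    exact hA (g n).2 ⟨(g n).1, by rw [Prod.mk.eta]; exact hgneg n⟩
  set a : ℕ → X := fun n => (g n).1 with ha_def
  set b : ℕ → Y := fun n => (g n).2 with hb_def
  have hfind : ∃ n, (∃ m, m < n ∧ a m = a n) ∨ (∃ m, m < n ∧ b m = b n) := by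
    obtain ⟨u, v, huv, heq⟩ := Finite.exists_ne_map_eq_of_infinite a
    rcases Nat.lt_or_ge u v with h | h
    · exact ⟨v, Or.inl ⟨u, h, heq⟩⟩
    · exact ⟨u, Or.inl ⟨v, by omega, heq.symm⟩⟩
  set N := Nat.find hfind with hN_def
  have hN := Nat.find_spec hfind
  have hmin : ∀ n, n < N → ¬((∃ m, m < n ∧ a m = a n) ∨ (∃ m, m < n ∧ b m = b n)) :=
    fun n h => Nat.find_min hfind h
  have hposedge : ∀ n, 0 < δ (a (n + 1), b n) := fun n => hgpos n
  have hnegedge : ∀ n, δ (a n, b n) < 0 := by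
    intro n
    have := hgneg n
    rwa [← Prod.mk.eta (p := g n)] at this
  by_cases hcaseA : ∃ m, m < N ∧ a m = a N
  · obtain ⟨i, hiN, hai⟩ := hcaseA
    apply assemble_cycle δ a b i N hiN hposedge hnegedge
    · rw [← hai]
      exact hnegedge i
    · intro s t hs1 hs2 ht1 ht2 hst
      by_contra hne'
      rcases Nat.lt_or_ge s t with h | h
      · rcases Nat.lt_or_ge t N with h2' | h2'
        · exact hmin t h2' (Or.inl ⟨s, h, hst⟩)
        · have htN : t = N := by omega
          subst htN
          exact hmin s (by omega) (Or.inl ⟨i, by omega, hai.trans hst.symm⟩)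
      · have h' : t < s := by omega
        rcases Nat.lt_or_ge s N with h2' | h2'
        · exact hmin s h2' (Or.inl ⟨t, h', hst.symm⟩)
        · have hsN : s = N := by omega
          subst hsN
          exact hmin t (by omega) (Or.inl ⟨i, by omega, hai.trans hst⟩)
    · intro s t hs1 hs2 ht1 ht2 hst
      by_contra hne'
      rcases Nat.lt_or_ge s t with h | h
      · exact hmin t (by omega) (Or.inr ⟨s, h, hst⟩)
      · exact hmin s (by omega) (Or.inr ⟨t, by omega, hst.symm⟩)
  · have hcaseB : ∃ m, m < N ∧ b m = b N := by
      rcases hN with h | h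
      · exact absurd h hcaseA
      · exact h
    obtain ⟨i, hiN, hbi⟩ := hcaseB
    apply assemble_cycle δ a b i N hiN hposedge hnegedge
    · rw [hbi]
      exact hnegedge N
    · intro s t hs1 hs2 ht1 ht2 hst
      by_contra hne'
      rcases Nat.lt_or_ge s t with h | h
      · rcases Nat.lt_or_ge t N with h2' | h2'
        · exact hmin t h2' (Or.inl ⟨s, h, hst⟩)
        · have htN : t = N := by omega
          subst htN
          exact hcaseA ⟨s, by omega, hst⟩
      · have h' : t < s := by omega
        rcases Nat.lt_or_ge s N with h2' | h2'
        · exact hmin s h2' (Or.inl ⟨t, h', hst.symm⟩)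
        · have hsN : s = N := by omega
          subst hsN
          exact hcaseA ⟨t, by omega, hst.symm⟩
    · intro s t hs1 hs2 ht1 ht2 hst
      by_contra hne'
      rcases Nat.lt_or_ge s t with h | h
      · exact hmin t (by omega) (Or.inr ⟨s, h, hst⟩)
      · exact hmin s (by omega) (Or.inr ⟨t, by omega, hst.symm⟩)

/-- Key lemma: lower bound for circulations via cycles. -/
lemma key_lemma (f : X × Y → ℝ) (L : ℝ)
    (hL : ∀ (m : ℕ) (x : Fin (m + 1) → X) (y : Fin (m + 1) → Y),
      Function.Injective x → Function.Injective y →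
      (m + 1 : ℝ) * L ≤ ∑ i, (f (x i, y i) - f (x i, y (i - 1))))
    (hLneg : L ≤ 0) :
    ∀ (n : ℕ) (δ : X × Y → ℝ),
      (Finset.univ.filter (fun s => δ s ≠ 0)).card ≤ n →
      (∀ a, ∑ b, δ (a, b) = 0) → (∀ b, ∑ a, δ (a, b) = 0) →
      (∑ s, max (δ s) 0) * L ≤ ∑ s, δ s * f s := by
  intro n
  induction n with
  | zero =>
    intro δ hcard hrow hcol
    have hδ : ∀ s, δ s = 0 := by
      intro s
      by_contra h
      have hmem : s ∈ Finset.univ.filter (fun s => δ s ≠ 0) := by simp [h]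
      have := Finset.card_pos.mpr ⟨s, hmem⟩
      omega
    simp [hδ]
  | succ k ih =>
    intro δ hcard hrow hcol
    by_cases hδ0 : ∀ s, δ s = 0
    · simp [hδ0]
    · push_neg at hδ0
      obtain ⟨m, x, y, hxinj, hyinj, hposc, hnegc⟩ := exists_cycle δ hrow hcol hδ0
      set Ep : X × Y → ℝ := edgeInd x y with hEp
      set En : X × Y → ℝ := edgeInd x (fun i => y (i - 1)) with hEn
      set ε : ℝ := Finset.univ.inf' Finset.univ_nonempty
        (fun i => min (δ (x i, y i)) (-δ (x i, y (i - 1)))) with hε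
      have hε_le : ∀ i, ε ≤ min (δ (x i, y i)) (-δ (x i, y (i - 1))) :=
        fun i => Finset.inf'_le _ (Finset.mem_univ i)
      have hεpos : 0 < ε := by
        rw [hε, Finset.lt_inf'_iff]
        intro i _
        exact lt_min (hposc i) (by linarith [hnegc i])
      set δ' : X × Y → ℝ := fun s => δ s - ε * (Ep s - En s) with hδ'
      -- pointwise facts
      have hEp_pos : ∀ i, Ep (x i, y i) = 1 := fun i => edgeInd_self hxinj i
      have hEn_neg : ∀ i, En (x i, y (i - 1)) = 1 := fun i => edgeInd_self hxinj (i)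
      have hEp_zero : ∀ s, (∀ i, (x i, y i) ≠ s) → Ep s = 0 := fun s h => edgeInd_of_not_mem h
      have hEn_zero : ∀ s, (∀ i, (x i, y (i - 1)) ≠ s) → En s = 0 := fun s h => edgeInd_of_not_mem h
      -- classification
      have hclass : ∀ s, (∃ i, (x i, y i) = s) ∨ (∃ i, (x i, y (i - 1)) = s) ∨
          (Ep s = 0 ∧ En s = 0) := by
        intro s
        by_cases h1 : ∃ i, (x i, y i) = s
        · exact Or.inl h1
        by_cases h2 : ∃ i, (x i, y (i - 1)) = s
        · exact Or.inr (Or.inl h2)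
        push_neg at h1 h2
        exact Or.inr (Or.inr ⟨hEp_zero s h1, hEn_zero s h2⟩)
      have hposcase : ∀ s, (∃ i, (x i, y i) = s) →
          0 < δ s ∧ Ep s = 1 ∧ En s = 0 ∧ ε ≤ δ s := by
        rintro s ⟨i, rfl⟩
        refine ⟨hposc i, hEp_pos i, ?_, le_trans (hε_le i) (min_le_left _ _)⟩
        apply hEn_zero
        intro j h
        have := hnegc j
        rw [h] at this
        exact absurd (hposc i) (not_lt.mpr (le_of_lt this))
      have hnegcase : ∀ s, (∃ i, (x i, y (i - 1)) = s) →
          δ s < 0 ∧ Ep s = 0 ∧ En s = 1 ∧ ε ≤ -δ s := by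
        rintro s ⟨i, rfl⟩
        refine ⟨hnegc i, ?_, hEn_neg i, le_trans (hε_le i) (min_le_right _ _)⟩
        apply hEp_zero
        intro j h
        have := hposc j
        rw [h] at this
        exact absurd (hnegc i) (not_lt.mpr (le_of_lt this))
      -- max identity
      have hmax : ∀ s, max (δ s) 0 - max (δ' s) 0 = ε * Ep s := by
        intro s
        rcases hclass s with h | h | h
        · obtain ⟨hd, he1, he2, hde⟩ := hposcase s h
          rw [hδ']
          simp only [he1, he2]
          rw [max_eq_left (le_of_lt hd), max_eq_left (by linarith)]
          ring
        · obtain ⟨hd, he1, he2, hde⟩ := hnegcase s h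
          rw [hδ']
          simp only [he1, he2]
          rw [max_eq_right (le_of_lt hd), max_eq_right (by linarith)]
          ring
        · rw [hδ']
          simp only [h.1, h.2]
          ring_nf
      -- support shrinks strictly
      have hsupp : Finset.univ.filter (fun s => δ' s ≠ 0) ⊂
          Finset.univ.filter (fun s => δ s ≠ 0) := by
        constructor
        · intro s hs
          simp only [Finset.mem_filter, Finset.mem_univ, true_and] at hs ⊢
          intro hd0
          apply hs
          rcases hclass s with h | h | h
          · exact absurd hd0 (ne_of_gt (hposcase s h).1)
          · exact absurd hd0 (ne_of_lt (hnegcase s h).1)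
          · rw [hδ']; simp only [h.1, h.2]; rw [hd0]; ring
        · intro hsub
          obtain ⟨i0, _, hi0⟩ := Finset.exists_mem_eq_inf' (Finset.univ_nonempty)
            (fun i => min (δ (x i, y i)) (-δ (x i, y (i - 1))))
          rcases min_cases (δ (x i0, y i0)) (-δ (x i0, y (i0 - 1))) with ⟨hc, _⟩ | ⟨hc, _⟩
          · have hmem : (x i0, y i0) ∈ Finset.univ.filter (fun s => δ s ≠ 0) := by
              simp only [Finset.mem_filter, Finset.mem_univ, true_and]
              exact ne_of_gt (hposc i0)
            have := hsub hmem
            simp only [Finset.mem_filter, Finset.mem_univ, true_and] at this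
            apply this
            rw [hδ']
            obtain ⟨_, he1, he2, _⟩ := hposcase _ ⟨i0, rfl⟩
            simp only [he1, he2]
            rw [← hi0] at hc
            have hcε : ε = δ (x i0, y i0) := by rw [hε]; exact hc
            rw [hcε]
            ring
          · have hmem : (x i0, y (i0 - 1)) ∈ Finset.univ.filter (fun s => δ s ≠ 0) := by
              simp only [Finset.mem_filter, Finset.mem_univ, true_and]
              exact ne_of_lt (hnegc i0)
            have := hsub hmem
            simp only [Finset.mem_filter, Finset.mem_univ, true_and] at this
            apply this
            rw [hδ']
            obtain ⟨_, he1, he2, _⟩ := hnegcase _ ⟨i0, rfl⟩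
            simp only [he1, he2]
            rw [← hi0] at hc
            have hcε : ε = -δ (x i0, y (i0 - 1)) := by rw [hε]; exact hc
            rw [hcε]
            ring
      have hcard' : (Finset.univ.filter (fun s => δ' s ≠ 0)).card ≤ k := by
        have := Finset.card_lt_card hsupp
        omega
      -- marginals of δ'
      have hrow' : ∀ a, ∑ b, δ' (a, b) = 0 := by
        intro a
        rw [hδ']
        simp only
        rw [Finset.sum_sub_distrib, hrow a, ← Finset.mul_sum, Finset.sum_sub_distrib]
        rw [sum_edgeInd_row x y a, sum_edgeInd_row x (fun i => y (i - 1)) a]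
        ring
      have hcol' : ∀ b, ∑ a, δ' (a, b) = 0 := by
        intro b
        rw [hδ']
        simp only
        rw [Finset.sum_sub_distrib, hcol b, ← Finset.mul_sum, Finset.sum_sub_distrib]
        rw [sum_edgeInd_col x y b, sum_edgeInd_col x (fun i => y (i - 1)) b]
        rw [sum_shift (fun i => if y i = b then (1:ℝ) else 0)]
        ring
      -- sum identities
      have hsum_f : ∑ s, δ s * f s = ∑ s, δ' s * f s +
          ε * ∑ i, (f (x i, y i) - f (x i, y (i - 1))) := by
        have e1 : ∑ s, Ep s * f s = ∑ i, f (x i, y i) := sum_edgeInd_mul x y f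
        have e2 : ∑ s, En s * f s = ∑ i, f (x i, y (i - 1)) :=
          sum_edgeInd_mul x (fun i => y (i - 1)) f
        have e3 : ∀ s, δ' s * f s = δ s * f s - ε * (Ep s * f s) + ε * (En s * f s) := by
          intro s
          rw [hδ']
          ring
        have h4 : ∑ s, δ' s * f s = (∑ s, δ s * f s) - ε * (∑ s, Ep s * f s)
            + ε * (∑ s, En s * f s) := by
          rw [Finset.sum_congr rfl (fun s _ => e3 s), Finset.sum_add_distrib,
            Finset.sum_sub_distrib, ← Finset.mul_sum, ← Finset.mul_sum]
        rw [h4, e1, e2, Finset.sum_sub_distrib]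
        ring
      have hsum_max : ∑ s, max (δ s) 0 = ∑ s, max (δ' s) 0 + ε * (m + 1) := by
        have h1 : ∑ s, (max (δ s) 0 - max (δ' s) 0) = ε * (m + 1) := by
          rw [Finset.sum_congr rfl (fun s _ => hmax s), ← Finset.mul_sum, sum_edgeInd]
        rw [Finset.sum_sub_distrib] at h1
        linarith
      -- conclude
      have hih := ih δ' hcard' hrow' hcol'
      have hcycle := hL m x y hxinj hyinj
      have hmul : ε * ((m + 1 : ℝ) * L) ≤ ε * ∑ i, (f (x i, y i) - f (x i, y (i - 1))) :=
        mul_le_mul_of_nonneg_left hcycle (le_of_lt hεpos)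
      have halg : (∑ s, max (δ s) 0) * L =
          (∑ s, max (δ' s) 0) * L + ε * ((m + 1 : ℝ) * L) := by
        rw [hsum_max]
        push_cast
        ring
      linarith

end Helpers


/-- for a fully supported pmf `p` on `X × Y`, `ε₁(p)` is the minimum,
over pairs of pmfs `(μ, γ)` on `X × Y` with equal marginals, of
`∏_{(x,y)} p(x,y)^{γ(x,y) − μ(x,y)}`. -/
theorem eps1_eq_min_prod {X Y : Type*} [Fintype X] [Fintype Y]
    (p : X × Y → ℝ) (hp : IsPMF p) (hpos : ∀ s, 0 < p s) :
    IsLeast { v : ℝ | ∃ μ γ : X × Y → ℝ, IsPMF μ ∧ IsPMF γ ∧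
      (∀ x, ∑ y, μ (x, y) = ∑ y, γ (x, y)) ∧
      (∀ y, ∑ x, μ (x, y) = ∑ x, γ (x, y)) ∧
      v = ∏ s : X × Y, p s ^ (γ s - μ s) } (eps1 p) := by
  classical
  obtain ⟨hpnn, hpsum⟩ := hp
  have hXY : Nonempty (X × Y) := by
    by_contra h
    have hemp : IsEmpty (X × Y) := not_nonempty_iff.mp h
    rw [Finset.univ_eq_empty, Finset.sum_empty] at hpsum
    exact one_ne_zero hpsum.symm
  have hX : Nonempty X := ⟨hXY.some.1⟩
  have hY : Nonempty Y := ⟨hXY.some.2⟩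
  set V : Set ℝ := { v : ℝ | ∃ (m : ℕ) (x : Fin (m + 1) → X) (y : Fin (m + 1) → Y),
    IsAdmissiblePath p x y ∧ v = pathValue p x y } with hV
  have heps : eps1 p = sInf V := rfl
  have hpv_pos : ∀ {m : ℕ} (x : Fin (m + 1) → X) (y : Fin (m + 1) → Y),
      0 < pathValue p x y := by
    intro m x y
    unfold pathValue
    apply Real.rpow_pos_of_pos
    exact div_pos (Finset.prod_pos fun i _ => hpos _) (Finset.prod_pos fun i _ => hpos _)
  have h1V : (1 : ℝ) ∈ V := by
    refine ⟨0, fun _ => hX.some, fun _ => hY.some, ⟨?_, ?_, fun i => hpos _⟩, ?_⟩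
    · intro aa bb _; exact Fin.ext (by omega)
    · intro aa bb _; exact Fin.ext (by omega)
    · unfold pathValue
      rw [div_self (ne_of_gt (Finset.prod_pos fun i _ => hpos _)), Real.one_rpow]
  have hVne : V.Nonempty := ⟨1, h1V⟩
  have hVfin : V.Finite := by
    set F : (Σ m : Fin (Fintype.card X), (Fin (m.1 + 1) → X) × (Fin (m.1 + 1) → Y)) → ℝ :=
      fun q => pathValue p q.2.1 q.2.2 with hF
    apply Set.Finite.subset (Set.finite_range F)
    rintro v ⟨m, x, y, ⟨hxinj, _, _⟩, rfl⟩
    have hm : m + 1 ≤ Fintype.card X := by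
      have := Fintype.card_le_of_injective x hxinj
      simpa using this
    exact ⟨⟨⟨m, by omega⟩, x, y⟩, rfl⟩
  have hmem : sInf V ∈ V := hVne.csInf_mem hVfin
  have hlb : ∀ v ∈ V, sInf V ≤ v := fun v hv => csInf_le hVfin.bddBelow hv
  set v0 := sInf V with hv0
  have hv0pos : 0 < v0 := by
    obtain ⟨m, x, y, _, hval⟩ := hmem
    rw [hval]; exact hpv_pos x y
  have hv0le1 : v0 ≤ 1 := hlb 1 h1V
  set L := Real.log v0 with hLdef
  have hLneg : L ≤ 0 := Real.log_nonpos (le_of_lt hv0pos) hv0le1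
  set f : X × Y → ℝ := fun s => Real.log (p s) with hf
  have hlogpv : ∀ (m : ℕ) (x : Fin (m + 1) → X) (y : Fin (m + 1) → Y),
      Real.log (pathValue p x y)
        = (1 / (m + 1 : ℝ)) * ∑ i, (f (x i, y i) - f (x i, y (i - 1))) := by
    intro m x y
    unfold pathValue
    rw [Real.log_rpow (div_pos (Finset.prod_pos fun i _ => hpos _)
      (Finset.prod_pos fun i _ => hpos _))]
    rw [Real.log_div (ne_of_gt (Finset.prod_pos fun i _ => hpos _))
      (ne_of_gt (Finset.prod_pos fun i _ => hpos _))]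
    rw [Real.log_prod (fun i _ => ne_of_gt (hpos _)),
      Real.log_prod (fun i _ => ne_of_gt (hpos _))]
    rw [Finset.sum_sub_distrib]
  have hL : ∀ (m : ℕ) (x : Fin (m + 1) → X) (y : Fin (m + 1) → Y),
      Function.Injective x → Function.Injective y →
      (m + 1 : ℝ) * L ≤ ∑ i, (f (x i, y i) - f (x i, y (i - 1))) := by
    intro m x y hxinj hyinj
    have hVmem : pathValue p x y ∈ V := ⟨m, x, y, ⟨hxinj, hyinj, fun i => hpos _⟩, rfl⟩
    have hle := hlb _ hVmem
    have hlog := Real.log_le_log hv0pos hle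
    rw [hlogpv m x y] at hlog
    have hm1 : (0:ℝ) < (m + 1 : ℝ) := by positivity
    have h2 := mul_le_mul_of_nonneg_left hlog (le_of_lt hm1)
    calc (m + 1 : ℝ) * L ≤ (m + 1 : ℝ) * ((1 / (m + 1 : ℝ))
          * ∑ i, (f (x i, y i) - f (x i, y (i - 1)))) := h2
      _ = ∑ i, (f (x i, y i) - f (x i, y (i - 1))) := by
          field_simp
  constructor
  · -- membership
    obtain ⟨m, x, y, ⟨hxinj, hyinj, _⟩, hval⟩ := hmem
    set c : ℝ := 1 / (m + 1 : ℝ) with hc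
    have hm1 : (0:ℝ) < (m + 1 : ℝ) := by positivity
    have hcpos : 0 < c := by rw [hc]; positivity
    refine ⟨fun s => c * edgeInd x (fun i => y (i - 1)) s, fun s => c * edgeInd x y s,
      ⟨fun s => mul_nonneg (le_of_lt hcpos) (edgeInd_nonneg _ _ s), ?_⟩,
      ⟨fun s => mul_nonneg (le_of_lt hcpos) (edgeInd_nonneg _ _ s), ?_⟩, ?_, ?_, ?_⟩
    · rw [← Finset.mul_sum, sum_edgeInd, hc]
      field_simp
    · rw [← Finset.mul_sum, sum_edgeInd, hc]
      field_simp
    · intro a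
      rw [← Finset.mul_sum, ← Finset.mul_sum, sum_edgeInd_row, sum_edgeInd_row]
    · intro b
      rw [← Finset.mul_sum, ← Finset.mul_sum, sum_edgeInd_col, sum_edgeInd_col]
      rw [sum_shift (fun i => if y i = b then (1:ℝ) else 0)]
    · have hrw : ∀ s : X × Y,
          p s ^ (c * edgeInd x y s - c * edgeInd x (fun i => y (i - 1)) s)
          = Real.exp (Real.log (p s)
              * (c * edgeInd x y s - c * edgeInd x (fun i => y (i - 1)) s)) :=
        fun s => Real.rpow_def_of_pos (hpos s) _
      rw [Finset.prod_congr rfl (fun s _ => hrw s), ← Real.exp_sum]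
      have hsum : ∑ s, Real.log (p s)
            * (c * edgeInd x y s - c * edgeInd x (fun i => y (i - 1)) s)
          = c * ∑ i, (f (x i, y i) - f (x i, y (i - 1))) := by
        have e1 := sum_edgeInd_mul x y f
        have e2 := sum_edgeInd_mul x (fun i => y (i - 1)) f
        have e3 : ∀ s : X × Y, Real.log (p s)
              * (c * edgeInd x y s - c * edgeInd x (fun i => y (i - 1)) s)
            = c * (edgeInd x y s * f s) - c * (edgeInd x (fun i => y (i - 1)) s * f s) := by
          intro s
          rw [hf]
          ring
        rw [Finset.sum_congr rfl fun s _ => e3 s, Finset.sum_sub_distrib,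
          ← Finset.mul_sum, ← Finset.mul_sum, e1, e2, Finset.sum_sub_distrib, mul_sub]
      rw [hsum, hc, ← hlogpv m x y, Real.exp_log (hpv_pos x y), heps, hval]
  · -- lower bound
    rintro v ⟨μ, γ, hμ, hγ, hmr, hmc, rfl⟩
    set δ : X × Y → ℝ := fun s => γ s - μ s with hδ
    have hrowδ : ∀ a, ∑ b, δ (a, b) = 0 := by
      intro a
      rw [hδ]
      simp only
      rw [Finset.sum_sub_distrib, ← hmr a, sub_self]
    have hcolδ : ∀ b, ∑ a, δ (a, b) = 0 := by
      intro b
      rw [hδ]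
      simp only
      rw [Finset.sum_sub_distrib, ← hmc b, sub_self]
    have hkey := key_lemma f L hL hLneg
      (Finset.univ.filter (fun s => δ s ≠ 0)).card δ le_rfl hrowδ hcolδ
    have hmaxle : ∑ s, max (δ s) 0 ≤ 1 := by
      calc ∑ s, max (δ s) 0 ≤ ∑ s, γ s := by
            refine Finset.sum_le_sum fun s _ => max_le ?_ (hγ.1 s)
            rw [hδ]
            simp only
            linarith [hμ.1 s]
        _ = 1 := hγ.2
    have h5 : L ≤ (∑ s, max (δ s) 0) * L := by
      have := mul_le_mul_of_nonpos_right hmaxle hLneg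
      linarith
    have h6 : L ≤ ∑ s, δ s * f s := le_trans h5 hkey
    have hv : ∏ s, p s ^ (γ s - μ s) = Real.exp (∑ s, δ s * f s) := by
      have hrw : ∀ s : X × Y, p s ^ (γ s - μ s) = Real.exp (δ s * f s) := by
        intro s
        rw [Real.rpow_def_of_pos (hpos s)]
        congr 1
        simp only [hδ, hf]
        ring
      rw [Finset.prod_congr rfl fun s _ => hrw s, ← Real.exp_sum]
    rw [heps, hv]
    calc v0 = Real.exp L := by rw [hLdef, Real.exp_log hv0pos]
      _ ≤ Real.exp (∑ s, δ s * f s) := Real.exp_le_exp.mpr h6
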